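/- Let K be a division ring, σ an endomorphism of K, δ a σ-derivation of K, and f(t) ∈ R = K[t;σ,δ] a nonzero polynomial of degree n whose right roots lie in the (σ,δ)-conjugacy classes Δ(a₁),…,Δ(a_r). Then Σᵢ₌₁ʳ dim_{C(aᵢ)} ker(f(T_{aᵢ})) ≤ n, where C(aᵢ) = C^{σ,δ}(aᵢ), ker(f(T_{aᵢ})) is a right C(aᵢ)-vector subspace of K, and f(T_a) denotes the additive map obtained by substituting the pseudo-linear map T_a for t in f. -/

import Mathlib

namespace LamLeroy

variable {K R : Type*} [DivisionRing K] [Ring R]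

section defs
variable (ι : K →+* R) (t : R) (σ : K →+* K) (δ : K →+ K)

/-- `Psi c = Σᵢ ι cᵢ tⁱ`. -/
noncomputable def Psi : (ℕ →₀ K) →+ R :=
  Finsupp.liftAddHom fun i => (AddMonoidHom.mulRight (t ^ i)).comp ι.toAddMonoidHom

lemma Psi_apply (c : ℕ →₀ K) : Psi ι t c = c.sum fun i b => ι b * t ^ i := by
  simp [Psi, Finsupp.liftAddHom_apply]
  rfl

/-- the pseudo-linear map `T_a`. -/
def Tm (a : K) : K → K := fun y => σ y * a + δ y

/-- `Phi a x c = Σⱼ cⱼ T_aʲ x = f(T_a)(x)`. -/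
noncomputable def Phi (a x : K) : (ℕ →₀ K) →+ K :=
  Finsupp.liftAddHom fun j => AddMonoidHom.mulRight ((Tm σ δ a)^[j] x)

lemma Phi_apply (a x : K) (c : ℕ →₀ K) :
    Phi σ δ a x c = c.sum fun j u => u * (Tm σ δ a)^[j] x := by
  simp [Phi, Finsupp.liftAddHom_apply]

/-- conjugation `a^x`. -/
def conj (x a : K) : K := σ x * a * x⁻¹ + δ x * x⁻¹

end defs

section basic
variable (σ : K →+* K) (δ : K →+ K)
variable (hδ : ∀ a b : K, δ (a * b) = σ a * δ b + δ a * b)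

lemma Tm_add (a x y : K) : Tm σ δ a (x + y) = Tm σ δ a x + Tm σ δ a y := by
  simp only [Tm, map_add, add_mul]
  abel

lemma Tm_zero (a : K) : Tm σ δ a 0 = 0 := by simp [Tm]

lemma Tm_iter_add (a : K) (j : ℕ) (x y : K) :
    (Tm σ δ a)^[j] (x + y) = (Tm σ δ a)^[j] x + (Tm σ δ a)^[j] y := by
  induction j generalizing x y with
  | zero => simp
  | succ j ih => simp only [Function.iterate_succ_apply, Tm_add, ih]

lemma Tm_iter_zero (a : K) (j : ℕ) : (Tm σ δ a)^[j] 0 = 0 := by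
  induction j with
  | zero => simp
  | succ j ih => simp only [Function.iterate_succ_apply, Tm_zero, ih]

include hδ in
lemma Tm_twist (a u y : K) :
    Tm σ δ a (u * y) = σ u * Tm σ δ a y + δ u * y := by
  simp only [Tm, map_mul, hδ]
  rw [mul_add, ← mul_assoc, add_assoc]

include hδ in
lemma delta_one : δ 1 = 0 := by
  have h := hδ 1 1
  simp only [mul_one, one_mul, map_one] at h
  have : δ 1 + δ 1 = δ 1 + 0 := by rw [← h, add_zero]
  exact (add_left_cancel this)

end basic

section conj
variable (σ : K →+* K) (δ : K →+ K)
variable (hδ : ∀ a b : K, δ (a * b) = σ a * δ b + δ a * b)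

include hδ in
lemma conj_one (a : K) : conj σ δ 1 a = a := by
  simp [conj, delta_one σ δ hδ]

include hδ in
lemma conj_mul (x y a : K) (hx : x ≠ 0) (hy : y ≠ 0) :
    conj σ δ x (conj σ δ y a) = conj σ δ (x * y) a := by
  simp only [conj, map_mul, hδ, mul_inv_rev, mul_add, add_mul, mul_assoc,
    mul_inv_cancel_left₀ hy, add_assoc]

include hδ in
lemma conj_cancel (x a : K) (hx : x ≠ 0) : conj σ δ x⁻¹ (conj σ δ x a) = a := by
  rw [conj_mul σ δ hδ _ _ _ (inv_ne_zero hx) hx, inv_mul_cancel₀ hx, conj_one σ δ hδ]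

lemma conj_neg (u a : K) : conj σ δ (-u) a = conj σ δ u a := by
  simp [conj, inv_neg, map_neg, neg_mul, mul_neg, neg_neg]

lemma cent_key (a u : K) (hu : u ≠ 0) (hC : conj σ δ u a = a) : σ u * a + δ u = a * u := by
  have h := congrArg (· * u) hC
  simpa [conj, add_mul, inv_mul_cancel_right₀ hu] using h

include hδ in
lemma Tm_cent (a u y : K) (hu : u ≠ 0) (hC : conj σ δ u a = a) :
    Tm σ δ a (y * u) = Tm σ δ a y * u := by
  have h := cent_key σ δ a u hu hC
  simp only [Tm, map_mul, hδ]
  rw [mul_assoc, ← add_assoc, ← mul_add, h, ← mul_assoc, add_mul, mul_assoc]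

include hδ in
lemma Tm_iter_cent (a u y : K) (j : ℕ) (hu : u ≠ 0) (hC : conj σ δ u a = a) :
    (Tm σ δ a)^[j] (y * u) = (Tm σ δ a)^[j] y * u := by
  induction j generalizing y with
  | zero => simp
  | succ j ih =>
      rw [Function.iterate_succ_apply', Function.iterate_succ_apply', ih,
        Tm_cent σ δ hδ a u _ hu hC]

include hδ in
lemma Phi_cent (a u y : K) (c : ℕ →₀ K) (hu : u ≠ 0) (hC : conj σ δ u a = a) :
    Phi σ δ a (y * u) c = Phi σ δ a y c * u := by
  rw [Phi_apply, Phi_apply, Finsupp.sum_mul]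
  exact Finsupp.sum_congr fun j _ => by
    rw [Tm_iter_cent σ δ hδ a u y j hu hC, mul_assoc]

lemma Phi_zero_x (a : K) (c : ℕ →₀ K) : Phi σ δ a 0 c = 0 := by
  rw [Phi_apply]
  exact Finset.sum_eq_zero fun j _ => by simp [Tm_iter_zero]

lemma Phi_add_x (a x y : K) (c : ℕ →₀ K) :
    Phi σ δ a (x + y) c = Phi σ δ a x c + Phi σ δ a y c := by
  rw [Phi_apply, Phi_apply, Phi_apply, ← Finsupp.sum_add]
  exact Finsupp.sum_congr fun j _ => by rw [Tm_iter_add, mul_add]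

lemma Phi_neg_x (a x : K) (c : ℕ →₀ K) : Phi σ δ a (-x) c = - Phi σ δ a x c := by
  have h := Phi_add_x σ δ a x (-x) c
  rw [add_neg_cancel, Phi_zero_x] at h
  exact (neg_eq_of_add_eq_zero_right h.symm).symm

lemma Phi_sub_x (a x y : K) (c : ℕ →₀ K) :
    Phi σ δ a (x - y) c = Phi σ δ a x c - Phi σ δ a y c := by
  rw [sub_eq_add_neg, Phi_add_x, Phi_neg_x, sub_eq_add_neg]

include hδ in
lemma Tm_conj (a x : K) (hx : x ≠ 0) : Tm σ δ a x = conj σ δ x a * x := by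
  simp [Tm, conj, add_mul, inv_mul_cancel_right₀ hx]

include hδ in
lemma Tm_iter_conj (a x : K) (hx : x ≠ 0) (j : ℕ) :
    (Tm σ δ a)^[j] x = (Tm σ δ (conj σ δ x a))^[j] 1 * x := by
  induction j with
  | zero => simp
  | succ j ih =>
      rw [Function.iterate_succ_apply', Function.iterate_succ_apply', ih,
        Tm_twist σ δ hδ, Tm_conj σ δ hδ a x hx]
      simp only [Tm]
      rw [← mul_assoc, ← add_mul]

include hδ in
lemma Phi_conj (a x : K) (hx : x ≠ 0) (c : ℕ →₀ K) :
    Phi σ δ a x c = Phi σ δ (conj σ δ x a) 1 c * x := by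
  rw [Phi_apply, Phi_apply, Finsupp.sum_mul]
  exact Finsupp.sum_congr fun j _ => by
    rw [Tm_iter_conj σ δ hδ a x hx j, mul_assoc]

end conj

section poly
variable (ι : K →+* R) (t : R) (σ : K →+* K) (δ : K →+ K)

/-- shift of coefficients: `shf d = d · X`. -/
noncomputable def shf (d : ℕ →₀ K) : ℕ →₀ K := Finsupp.mapDomain Nat.succ d

lemma shf_apply_succ (d : ℕ →₀ K) (k : ℕ) : shf d (k + 1) = d k :=
  Finsupp.mapDomain_apply Nat.succ_injective d k

lemma shf_apply_zero (d : ℕ →₀ K) : shf d 0 = 0 :=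
  Finsupp.mapDomain_notin_range _ _ (by simp)

lemma Psi_shf (d : ℕ →₀ K) : Psi ι t (shf d) = Psi ι t d * t := by
  rw [Psi_apply, Psi_apply, shf, Finsupp.sum_mapDomain_index (by simp) (by
    intro i b₁ b₂; rw [map_add, add_mul]), Finsupp.sum_mul]
  exact Finsupp.sum_congr fun i _ => by rw [pow_succ, mul_assoc]

lemma Phi_shf (a x : K) (d : ℕ →₀ K) :
    Phi σ δ a x (shf d) = Phi σ δ a (Tm σ δ a x) d := by
  rw [Phi_apply, Phi_apply, shf, Finsupp.sum_mapDomain_index (by simp) (by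
    intro i b₁ b₂; rw [add_mul])]
  exact Finsupp.sum_congr fun i _ => by rw [Function.iterate_succ_apply]

/-- coefficients of `tʲ · ι b`. -/
noncomputable def EE (b : K) : ℕ → (ℕ →₀ K)
  | 0 => Finsupp.single 0 b
  | (j + 1) => shf ((EE b j).mapRange σ (map_zero σ)) + (EE b j).mapRange δ (map_zero δ)

lemma EE_deg (b : K) (j k : ℕ) (h : j < k) : EE σ δ b j k = 0 := by
  induction j generalizing k with
  | zero =>
      exact Finsupp.single_eq_of_ne (by omega)
  | succ j ih =>
      obtain ⟨k, rfl⟩ : ∃ k', k = k' + 1 := ⟨k - 1, by omega⟩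
      rw [EE, Finsupp.add_apply, shf_apply_succ, Finsupp.mapRange_apply,
        Finsupp.mapRange_apply, ih k (by omega), ih (k+1) (by omega), map_zero, map_zero,
        add_zero]

lemma Psi_EE (hrel : ∀ x : K, t * ι x = ι (σ x) * t + ι (δ x)) (b : K) (j : ℕ) :
    Psi ι t (EE σ δ b j) = t ^ j * ι b := by
  induction j with
  | zero =>
      rw [EE, Psi, Finsupp.liftAddHom_apply_single]
      simp
  | succ j ih =>
      have key : t * Psi ι t (EE σ δ b j)
          = Psi ι t (shf ((EE σ δ b j).mapRange σ (map_zero σ)))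
            + Psi ι t ((EE σ δ b j).mapRange δ (map_zero δ)) := by
        rw [Psi_shf, Psi_apply ι t ((EE σ δ b j).mapRange (⇑σ) (map_zero σ)),
          Finsupp.sum_mapRange_index (by simp), Finsupp.sum_mul,
          Psi_apply ι t ((EE σ δ b j).mapRange (⇑δ) (map_zero δ)),
          Finsupp.sum_mapRange_index (by simp),
          Psi_apply ι t (EE σ δ b j), Finsupp.mul_sum, ← Finsupp.sum_add]
        exact Finsupp.sum_congr fun i _ => by
          rw [← mul_assoc, hrel, add_mul, mul_assoc, ← pow_succ', pow_succ, ← mul_assoc]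
      rw [EE, map_add, ← key, ih, ← mul_assoc, ← pow_succ']

lemma Phi_EE (hδ : ∀ a b : K, δ (a * b) = σ a * δ b + δ a * b) (a x b : K) (j : ℕ) :
    Phi σ δ a x (EE σ δ b j) = (Tm σ δ a)^[j] (b * x) := by
  induction j with
  | zero =>
      rw [EE, Phi, Finsupp.liftAddHom_apply_single]
      simp
  | succ j ih =>
      rw [Function.iterate_succ_apply', ← ih, EE, map_add, Phi_shf,
        Phi_apply σ δ a (Tm σ δ a x), Finsupp.sum_mapRange_index (by simp),
        Phi_apply σ δ a x ((EE σ δ b j).mapRange δ _), Finsupp.sum_mapRange_index (by simp),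
        ← Finsupp.sum_add, Phi_apply]
      have hTm : Tm σ δ a ((EE σ δ b j).sum fun i u => u * (Tm σ δ a)^[i] x)
          = (EE σ δ b j).sum fun i u => Tm σ δ a (u * (Tm σ δ a)^[i] x) := by
        classical
        rw [Finsupp.sum, Finsupp.sum]
        induction (EE σ δ b j).support using Finset.induction with
        | empty => simp [Tm_zero]
        | insert _ _ hni ih2 => rw [Finset.sum_insert hni, Finset.sum_insert hni, Tm_add, ih2]
      rw [hTm]
      exact (Finsupp.sum_congr fun i _ => by
        rw [Tm_twist σ δ hδ,
          show Tm σ δ a ((Tm σ δ a)^[i] x) = (Tm σ δ a)^[i+1] x from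
            (Function.iterate_succ_apply' _ _ _).symm,
          Function.iterate_succ_apply]).symm

/-- coefficients of `(Σ dⱼ tʲ) · ι b`. -/
noncomputable def mulb (d : ℕ →₀ K) (b : K) : ℕ →₀ K := d.sum fun j u => u • EE σ δ b j

lemma Psi_smul (u : K) (e : ℕ →₀ K) : Psi ι t (u • e) = ι u * Psi ι t e := by
  rw [Psi_apply, Psi_apply, Finsupp.sum_smul_index (by simp), Finsupp.mul_sum]
  exact Finsupp.sum_congr fun i _ => by rw [map_mul, mul_assoc]

lemma Phi_smul (a x u : K) (e : ℕ →₀ K) : Phi σ δ a x (u • e) = u * Phi σ δ a x e := by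
  rw [Phi_apply, Phi_apply, Finsupp.sum_smul_index (by simp), Finsupp.mul_sum]
  exact Finsupp.sum_congr fun i _ => by rw [mul_assoc]

lemma Psi_mulb (hrel : ∀ x : K, t * ι x = ι (σ x) * t + ι (δ x)) (d : ℕ →₀ K) (b : K) :
    Psi ι t (mulb σ δ d b) = Psi ι t d * ι b := by
  rw [mulb, map_finsuppSum, Psi_apply ι t d, Finsupp.sum_mul]
  exact Finsupp.sum_congr fun j _ => by
    rw [Psi_smul, Psi_EE ι t σ δ hrel, ← mul_assoc]

lemma Phi_mulb (hδ : ∀ a b : K, δ (a * b) = σ a * δ b + δ a * b) (a x : K) (d : ℕ →₀ K)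
    (b : K) : Phi σ δ a x (mulb σ δ d b) = Phi σ δ a (b * x) d := by
  rw [mulb, map_finsuppSum, Phi_apply σ δ a (b * x)]
  exact Finsupp.sum_congr fun j _ => by
    rw [Phi_smul, Phi_EE σ δ hδ]

lemma mulb_deg (d : ℕ →₀ K) (b : K) (k : ℕ) (hd : ∀ j, d j ≠ 0 → j < k) :
    mulb σ δ d b k = 0 := by
  rw [mulb, Finsupp.sum_apply]
  exact Finset.sum_eq_zero fun j hj => by
    simp [EE_deg σ δ b j k (hd j (Finsupp.mem_support_iff.mp hj))]

end poly

section division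
variable (ι : K →+* R) (t : R) (σ : K →+* K) (δ : K →+ K)

lemma exists_div
    (hδ : ∀ a b : K, δ (a * b) = σ a * δ b + δ a * b)
    (hrel : ∀ x : K, t * ι x = ι (σ x) * t + ι (δ x))
    (hbasis : ∀ f : R, ∃! c : ℕ →₀ K, f = c.sum fun i b => ι b * t ^ i)
    (eval : R → K → K)
    (heval : ∀ (f : R) (a : K), ∃ g : R, f - ι (eval f a) = g * (t - ι a))
    (c : ℕ →₀ K) (b : K) (hroot : Phi σ δ b 1 c = 0) :
    ∃ d : ℕ →₀ K, c = shf d - mulb σ δ d b := by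
  set f : R := Psi ι t c with hf
  obtain ⟨g, hg⟩ := heval f b
  obtain ⟨d, hd, -⟩ := hbasis g
  have hgd : g = Psi ι t d := by rw [Psi_apply]; exact hd
  set c' : ℕ →₀ K := shf d - mulb σ δ d b + Finsupp.single 0 (eval f b) with hc'
  have hsingle : Psi ι t (Finsupp.single 0 (eval f b)) = ι (eval f b) := by
    rw [Psi, Finsupp.liftAddHom_apply_single]; simp
  have hfc' : f = Psi ι t c' := by
    rw [hc', map_add, map_sub, Psi_shf, Psi_mulb ι t σ δ hrel, hsingle, ← hgd, ← mul_sub]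
    have : f - ι (eval f b) + ι (eval f b) = g * (t - ι b) + ι (eval f b) := by rw [hg]
    simpa using this
  have hcc' : c = c' := by
    obtain ⟨c₀, hc₀, huniq⟩ := hbasis f
    have e1 : f = c.sum fun i b => ι b * t ^ i := by rw [← Psi_apply]
    have e2 : f = c'.sum fun i b => ι b * t ^ i := by rw [← Psi_apply]; exact hfc'
    rw [huniq c e1, huniq c' e2]
  have h1 : Tm σ δ b 1 = b * 1 := by simp [Tm, delta_one σ δ hδ]
  have h2 : Phi σ δ b 1 (Finsupp.single 0 (eval f b)) = eval f b := by
    rw [Phi, Finsupp.liftAddHom_apply_single]; simp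
  have h0 : eval f b = 0 := by
    have hx := hroot
    rw [hcc', hc', map_add, map_sub, Phi_shf, Phi_mulb σ δ hδ, h1, sub_self, zero_add, h2]
      at hx
    exact hx
  refine ⟨d, ?_⟩
  rw [hcc', hc', h0]
  simp

lemma deg_step (c d : ℕ →₀ K) (b : K) (n : ℕ)
    (hcd : c = shf d - mulb σ δ d b)
    (hdeg : ∀ i, n + 1 < i → c i = 0) :
    (∀ j, n < j → d j = 0) ∧ c (n + 1) = d n := by
  have hd : ∀ j, n < j → d j = 0 := by
    by_contra h
    push_neg at h
    obtain ⟨j₀, hj₀, hdj₀⟩ := h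
    have hne : d.support.Nonempty := ⟨j₀, Finsupp.mem_support_iff.mpr hdj₀⟩
    have hdm : d (d.support.max' hne) ≠ 0 :=
      Finsupp.mem_support_iff.mp (d.support.max'_mem hne)
    have hmn : n < d.support.max' hne :=
      lt_of_lt_of_le hj₀ (d.support.le_max' j₀ (Finsupp.mem_support_iff.mpr hdj₀))
    have hcm : c (d.support.max' hne + 1) = d (d.support.max' hne) := by
      rw [hcd, Finsupp.sub_apply, shf_apply_succ, mulb_deg σ δ d b _
        (fun j hj => Nat.lt_succ_of_le (d.support.le_max' j (Finsupp.mem_support_iff.mpr hj))),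
        sub_zero]
    exact hdm (by rw [← hcm]; exact hdeg _ (by omega))
  refine ⟨hd, ?_⟩
  rw [hcd, Finsupp.sub_apply, shf_apply_succ, mulb_deg σ δ d b (n + 1)
    (fun j hj => by by_contra hh; push_neg at hh; exact hj (hd j (by omega))), sub_zero]

end division

section main
variable (σ : K →+* K) (δ : K →+ K)

/-- the map `x ↦ T_a x - b x`. -/
noncomputable def lamA (a b : K) : K →+ K where
  toFun := fun x => Tm σ δ a x - b * x
  map_zero' := by simp [Tm_zero]
  map_add' := by
    intro x y
    simp only [Tm_add, mul_add]
    abel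

lemma lamA_cent (hδ : ∀ a b : K, δ (a * b) = σ a * δ b + δ a * b) (a b u y : K)
    (hu : u ≠ 0) (hC : conj σ δ u a = a) :
    lamA σ δ a b (y * u) = lamA σ δ a b y * u := by
  show Tm σ δ a (y * u) - b * (y * u) = (Tm σ δ a y - b * y) * u
  rw [Tm_cent σ δ hδ a u y hu hC, sub_mul, mul_assoc]

lemma indep_zero (hδ : ∀ a b : K, δ (a * b) = σ a * δ b + δ a * b) (a : K) (B : Finset K)
    (hind : ∀ g : K → K, (∀ x, g x = 0 ∨ conj σ δ (g x) a = a) →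
      ∑ x ∈ B, x * g x = 0 → ∀ x ∈ B, g x = 0) :
    (0 : K) ∉ B := by
  classical
  intro h0
  have h := hind (fun z => if z = 0 then 1 else 0)
    (fun x => by
      by_cases hx : x = 0
      · simp only [hx, if_pos]
        exact Or.inr (conj_one σ δ hδ a)
      · simp [hx])
    (Finset.sum_eq_zero fun z hz => by
      by_cases hzz : z = 0 <;> simp [hzz]) 0 h0
  simp at h

lemma main_ind {R : Type*} [Ring R] (ι : K →+* R) (t : R)
    (hδ : ∀ a b : K, δ (a * b) = σ a * δ b + δ a * b)
    (hrel : ∀ x : K, t * ι x = ι (σ x) * t + ι (δ x))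
    (hbasis : ∀ f : R, ∃! c : ℕ →₀ K, f = c.sum fun i b => ι b * t ^ i)
    (eval : R → K → K)
    (heval : ∀ (f : R) (a : K), ∃ g : R, f - ι (eval f a) = g * (t - ι a))
    (r : ℕ) (as : Fin r → K)
    (hdistinct : ∀ i j : Fin r, i ≠ j → ¬ ∃ x : K, x ≠ 0 ∧ as j = conj σ δ x (as i)) :
    ∀ n : ℕ, ∀ c : ℕ →₀ K, c n ≠ 0 → (∀ i, n < i → c i = 0) →
    ∀ B : Fin r → Finset K,
      (∀ i, ∀ x ∈ B i, Phi σ δ (as i) x c = 0) →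
      (∀ i (g : K → K), (∀ x, g x = 0 ∨ conj σ δ (g x) (as i) = as i) →
        ∑ x ∈ B i, x * g x = 0 → ∀ x ∈ B i, g x = 0) →
      ∑ i, (B i).card ≤ n := by
  intro n
  induction n with
  | zero =>
      intro c hlead hdeg B hmem hind
      have hB : ∀ i, B i = ∅ := by
        intro i
        rw [Finset.eq_empty_iff_forall_notMem]
        intro x hx
        have hx0 : x ≠ 0 := by
          intro h; exact indep_zero σ δ hδ (as i) (B i) (hind i) (h ▸ hx)
        have hcs : c = Finsupp.single 0 (c 0) := by
          ext k
          cases k with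
          | zero => simp
          | succ k =>
              rw [hdeg (k+1) (by omega), Finsupp.single_apply, if_neg (by omega)]
        have hz := hmem i x hx
        rw [hcs, Phi, Finsupp.liftAddHom_apply_single] at hz
        simp only [Function.iterate_zero, id_eq, AddMonoidHom.coe_mulRight] at hz
        rcases mul_eq_zero.mp hz with h|h
        · exact hlead h
        · exact hx0 h
      simp [hB]
  | succ n IH =>
      intro c hlead hdeg B hmem hind
      by_cases hBe : ∀ i, B i = ∅
      · simp [hBe]
      push_neg at hBe
      obtain ⟨i₀, hi₀⟩ := hBe
      obtain ⟨x₀, hx₀B⟩ := hi₀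
      have hx₀0 : x₀ ≠ 0 := fun h => indep_zero σ δ hδ (as i₀) (B i₀) (hind i₀) (h ▸ hx₀B)
      set b : K := conj σ δ x₀ (as i₀) with hb
      have hPhib : Phi σ δ b 1 c = 0 := by
        have h1 := hmem i₀ x₀ hx₀B
        rw [Phi_conj σ δ hδ (as i₀) x₀ hx₀0 c] at h1
        exact (mul_eq_zero.mp h1).resolve_right hx₀0
      obtain ⟨d, hcd⟩ := exists_div ι t σ δ hδ hrel hbasis eval heval c b hPhib
      obtain ⟨hd, hdn⟩ := deg_step σ δ c d b n hcd hdeg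
      have hcomp : ∀ (a x : K), Phi σ δ a x c = Phi σ δ a (Tm σ δ a x - b * x) d := by
        intro a x
        rw [hcd, map_sub, Phi_shf, Phi_mulb σ δ hδ, Phi_sub_x]
      classical
      set S : Fin r → Finset K := fun i => if i = i₀ then (B i₀).erase x₀ else B i with hS
      set B' : Fin r → Finset K := fun i => (S i).image (lamA σ δ (as i) b) with hB'
      have hSsub : ∀ i, S i ⊆ B i := by
        intro i
        by_cases h : i = i₀
        · subst h; simp [hS, Finset.erase_subset]
        · simp [hS, h]
      have hker : ∀ i w, lamA σ δ (as i) b w = 0 → w ≠ 0 → conj σ δ w (as i) = b := by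
        intro i w hw hw0
        have h2 : Tm σ δ (as i) w = b * w := by
          have h1 : Tm σ δ (as i) w - b * w = 0 := hw
          exact sub_eq_zero.mp h1
        rw [Tm_conj σ δ hδ (as i) w hw0] at h2
        exact mul_right_cancel₀ hw0 h2
      have hker₀ : ∀ w, lamA σ δ (as i₀) b w = 0 →
          ∃ u, w = x₀ * u ∧ (u = 0 ∨ conj σ δ u (as i₀) = as i₀) := by
        intro w hw
        rcases eq_or_ne w 0 with rfl|hw0
        · exact ⟨0, by simp, Or.inl rfl⟩
        · have hcw : conj σ δ w (as i₀) = b := hker i₀ w hw hw0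
          refine ⟨x₀⁻¹ * w, ?_, Or.inr ?_⟩
          · rw [← mul_assoc, mul_inv_cancel₀ hx₀0, one_mul]
          · rw [← conj_mul σ δ hδ _ _ _ (inv_ne_zero hx₀0) hw0, hcw, hb,
              conj_cancel σ δ hδ _ _ hx₀0]
      have hkerne : ∀ i, i ≠ i₀ → ∀ w, lamA σ δ (as i) b w = 0 → w = 0 := by
        intro i hi w hw
        by_contra hw0
        have hcw : conj σ δ w (as i) = b := hker i w hw hw0
        refine hdistinct i₀ i (Ne.symm hi) ⟨w⁻¹ * x₀, mul_ne_zero (inv_ne_zero hw0) hx₀0, ?_⟩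
        rw [← conj_mul σ δ hδ _ _ _ (inv_ne_zero hw0) hx₀0, ← hb, ← hcw,
          conj_cancel σ δ hδ _ _ hw0]
      have hinj : ∀ i, Set.InjOn (lamA σ δ (as i) b) (S i) := by
        intro i x hx x' hx' hxx'
        have h0 : lamA σ δ (as i) b (x - x') = 0 := by rw [map_sub, hxx', sub_self]
        by_cases hi : i = i₀
        · rw [hi] at hx hx' h0
          obtain ⟨u, hxu, hu⟩ := hker₀ (x - x') h0
          rcases hu with rfl|hc
          · rw [mul_zero] at hxu
            exact sub_eq_zero.mp hxu
          · by_contra hne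
            have hune : u ≠ 0 := by
              intro h; subst h; rw [mul_zero] at hxu; exact hne (sub_eq_zero.mp hxu)
            have hx2 : x ∈ B i₀ ∧ ¬x = x₀ := by simpa [hS] using hx
            have hx'2 : x' ∈ B i₀ ∧ ¬x' = x₀ := by simpa [hS] using hx'
            have hxS : x ∈ (B i₀).erase x₀ := Finset.mem_erase.mpr ⟨hx2.2, hx2.1⟩
            have hx'S : x' ∈ (B i₀).erase x₀ := Finset.mem_erase.mpr ⟨hx'2.2, hx'2.1⟩
            have hxB := Finset.mem_of_mem_erase hxS
            have hx'B := Finset.mem_of_mem_erase hx'S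
            have hxne₀ := Finset.ne_of_mem_erase hxS
            have hx'ne₀ := Finset.ne_of_mem_erase hx'S
            set h : K → K :=
              fun z => if z = x then 1 else if z = x' then -1 else if z = x₀ then -u else 0
              with hh
            have hCh : ∀ z, h z = 0 ∨ conj σ δ (h z) (as i₀) = as i₀ := by
              intro z
              simp only [hh]
              split_ifs
              · exact Or.inr (conj_one σ δ hδ _)
              · exact Or.inr (by rw [conj_neg]; exact conj_one σ δ hδ _)
              · exact Or.inr (by rw [conj_neg]; exact hc)
              · exact Or.inl rfl
            have htsub : ({x, x', x₀} : Finset K) ⊆ B i₀ := by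
              intro z hz
              simp only [Finset.mem_insert, Finset.mem_singleton] at hz
              rcases hz with rfl|rfl|rfl
              exacts [hxB, hx'B, hx₀B]
            have hsum : ∑ z ∈ B i₀, z * h z = 0 := by
              rw [← Finset.sum_subset htsub (fun z hz hnz => ?_)]
              · rw [Finset.sum_insert (by simp [hne, hxne₀]),
                  Finset.sum_insert (by simp [hx'ne₀]), Finset.sum_singleton]
                have e1 : h x = 1 := by simp [hh]
                have e2 : h x' = -1 := by
                  simp [hh, show ¬x' = x from fun h0 => hne h0.symm]
                have e3 : h x₀ = -u := by
                  simp [hh, show ¬x₀ = x from fun h0 => hxne₀ h0.symm,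
                    show ¬x₀ = x' from fun h0 => hx'ne₀ h0.symm]
                rw [e1, e2, e3, mul_one, mul_neg_one, mul_neg]
                have e4 : x + (-x' + -(x₀ * u)) = (x - x') - x₀ * u := by abel
                rw [e4, hxu, sub_self]
              · simp only [Finset.mem_insert, Finset.mem_singleton, not_or] at hnz
                simp [hh, hnz.1, hnz.2.1, hnz.2.2]
            have hx1 := hind i₀ h hCh hsum x hxB
            simp [hh] at hx1
        · exact sub_eq_zero.mp (hkerne i hi _ h0)
      have hmem' : ∀ i, ∀ y ∈ B' i, Phi σ δ (as i) y d = 0 := by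
        intro i y hy
        obtain ⟨x, hxS, rfl⟩ := Finset.mem_image.mp (by simpa [hB'] using hy)
        have hz := hmem i x (hSsub i hxS)
        rw [hcomp (as i) x] at hz
        exact hz
      have hind' : ∀ i (g : K → K), (∀ x, g x = 0 ∨ conj σ δ (g x) (as i) = as i) →
          ∑ y ∈ B' i, y * g y = 0 → ∀ y ∈ B' i, g y = 0 := by
        intro i g hg hsum y hy
        have hsum2 : ∑ x ∈ S i, lamA σ δ (as i) b x * g (lamA σ δ (as i) b x) = 0 := by
          rw [Finset.sum_image (fun x hx x' hx' h => hinj i hx hx' h)] at hsum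
          exact hsum
        have hterm : ∀ x ∈ S i, lamA σ δ (as i) b x * g (lamA σ δ (as i) b x)
            = lamA σ δ (as i) b (x * g (lamA σ δ (as i) b x)) := by
          intro x hx
          rcases eq_or_ne (g (lamA σ δ (as i) b x)) 0 with h|h
          · rw [h, mul_zero, mul_zero, map_zero]
          · rcases hg (lamA σ δ (as i) b x) with h'|h'
            · exact absurd h' h
            · exact (lamA_cent σ δ hδ (as i) b _ x h h').symm
        rw [Finset.sum_congr rfl hterm, ← map_sum] at hsum2
        obtain ⟨x, hxS, rfl⟩ := Finset.mem_image.mp hy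
        by_cases hi : i = i₀
        · rw [hi] at hsum2 hxS hg ⊢
          obtain ⟨u, hsu, hu⟩ := hker₀ _ hsum2
          set h : K → K := fun z => if z = x₀ then -u else g (lamA σ δ (as i₀) b z) with hh
          have hCh : ∀ z, h z = 0 ∨ conj σ δ (h z) (as i₀) = as i₀ := by
            intro z
            simp only [hh]
            split_ifs
            · rcases hu with rfl|hc
              · exact Or.inl neg_zero
              · exact Or.inr (by rw [conj_neg]; exact hc)
            · exact hg _
          have eS : S i₀ = (B i₀).erase x₀ := by simp [hS]
          have hsum3 : ∑ z ∈ B i₀, z * h z = 0 := by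
            rw [← Finset.sum_erase_add (B i₀) _ hx₀B]
            have e : ∀ z ∈ (B i₀).erase x₀, z * h z = z * g (lamA σ δ (as i₀) b z) := by
              intro z hz
              simp [hh, Finset.ne_of_mem_erase hz]
            rw [Finset.sum_congr rfl e, ← eS, hsu]
            have ex : h x₀ = -u := by simp [hh]
            rw [ex, mul_neg, add_neg_cancel]
          have hxE : x ∈ (B i₀).erase x₀ := by rw [← eS]; exact hxS
          have hz := hind i₀ h hCh hsum3 x (Finset.mem_of_mem_erase hxE)
          simpa [hh, Finset.ne_of_mem_erase hxE] using hz
        · have eS : S i = B i := by simp [hS, hi]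
          have h0 : (∑ x ∈ S i, x * g (lamA σ δ (as i) b x)) = 0 := hkerne i hi _ hsum2
          exact hind i (fun z => g (lamA σ δ (as i) b z)) (fun z => hg _)
            (by rw [← eS]; exact h0) x (by rw [← eS]; exact hxS)
      have hcard : ∀ i, i ≠ i₀ → (B' i).card = (B i).card := by
        intro i hi
        rw [hB']
        simp only
        rw [Finset.card_image_of_injOn (hinj i)]
        simp [hS, hi]
      have hcard₀ : (B' i₀).card = (B i₀).card - 1 := by
        rw [hB']
        simp only
        rw [Finset.card_image_of_injOn (hinj i₀)]
        simp [hS, Finset.card_erase_of_mem hx₀B]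
      have hIH := IH d (by rw [← hdn]; exact hlead) (fun i hi => hd i hi) B' hmem' hind'
      have hpos : 1 ≤ (B i₀).card := Finset.card_pos.mpr ⟨x₀, hx₀B⟩
      rw [Fintype.sum_eq_add_sum_compl i₀] at hIH ⊢
      have hcompl : ∑ i ∈ ({i₀}ᶜ : Finset (Fin r)), (B' i).card
          = ∑ i ∈ ({i₀}ᶜ : Finset (Fin r)), (B i).card :=
        Finset.sum_congr rfl fun i hi => hcard i (by simpa using hi)
      rw [hcompl, hcard₀] at hIH
      omega

end main

end LamLeroy




/-- (Lam–Leroy dimension bound.) Let `K` be a division ring, `R = K[t;σ,δ]` an Ore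
extension, and `f ≠ 0` of degree `n` whose right roots lie in the pairwise distinct
(σ,δ)-conjugacy classes `Δ(a₁),…,Δ(a_r)`.  Then
`Σᵢ dim_{C(aᵢ)} ker f(T_{aᵢ}) ≤ n`, expressed as: for any choice of finite subsets
`Bᵢ ⊆ ker f(T_{aᵢ})` that are right linearly independent over the centralizer
`C(aᵢ) = {c : c = 0 ∨ σ(c)aᵢc⁻¹ + δ(c)c⁻¹ = aᵢ}`, one has `Σᵢ |Bᵢ| ≤ n`.
Here `T_b(x) = σ(x)b + δ(x)` and `f(T_b) = Σ cⱼ T_bʲ`. -/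
theorem sum_kernel_dims_le_degree {K R : Type*} [DivisionRing K] [Ring R]
    (ι : K →+* R) (t : R) (σ : K →+* K) (δ : K →+ K)
    (hδ : ∀ a b : K, δ (a * b) = σ a * δ b + δ a * b)
    (hrel : ∀ x : K, t * ι x = ι (σ x) * t + ι (δ x))
    (hbasis : ∀ f : R, ∃! c : ℕ →₀ K, f = c.sum fun i b => ι b * t ^ i)
    (eval : R → K → K)
    (heval : ∀ (f : R) (a : K), ∃ g : R, f - ι (eval f a) = g * (t - ι a))
    (f : R) (c : ℕ →₀ K) (n : ℕ)
    (hc : f = c.sum fun i b => ι b * t ^ i)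
    (hlead : c n ≠ 0) (hdeg : ∀ i : ℕ, n < i → c i = 0)
    (r : ℕ) (as : Fin r → K)
    (hdistinct : ∀ i j : Fin r, i ≠ j →
      ¬ ∃ x : K, x ≠ 0 ∧ as j = σ x * as i * x⁻¹ + δ x * x⁻¹)
    (hroots : ∀ b : K, eval f b = 0 →
      ∃ (i : Fin r) (x : K), x ≠ 0 ∧ b = σ x * as i * x⁻¹ + δ x * x⁻¹) :
    ∀ B : Fin r → Finset K,
      (∀ i : Fin r, ∀ x ∈ B i,
        (c.sum fun j b => b * (fun y => σ y * as i + δ y)^[j] x) = 0) →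
      (∀ (i : Fin r) (g : K → K),
        (∀ x : K, g x = 0 ∨ σ (g x) * as i * (g x)⁻¹ + δ (g x) * (g x)⁻¹ = as i) →
        ∑ x ∈ B i, x * g x = 0 → ∀ x ∈ B i, g x = 0) →
      ∑ i : Fin r, (B i).card ≤ n := by
  intro B hmemB hindB
  refine LamLeroy.main_ind σ δ ι t hδ hrel hbasis eval heval r as
    (fun i j hij h => hdistinct i j hij h) n c hlead hdeg B ?_ hindB
  intro i x hx
  rw [LamLeroy.Phi_apply]
  exact hmemB i x hx
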